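/- Assume char F ≠ 2 and let a,b,c,d be paths in the double quiver Q* that are all closed in the same vertex v ∈ Q₀. Then: (R₁) tr(abcd) ≡ 0; and (R₂) tr(abc) ≡ 0 whenever a and b intersect at a vertex different from v, i.e., a = x₁y₁ and b = x₂y₂ for paths x₁,x₂,y₁,y₂ in Q* with x₁'' = x₂'' = w for some vertex w ≠ v. -/

import Mathlib

open MvPolynomial Matrix

set_option maxHeartbeats 1000000
set_option synthInstance.maxHeartbeats 400000

section QuiverSemiInvariants

variable {V A : Type}

/-- Arrows of the double quiver `Q*`: `Sum.inl a` is the arrow `a ∈ Q₁`,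
`Sum.inr a` is the reversed arrow `a*`. -/
abbrev DArrow (A : Type) : Type := A ⊕ A

/-- The involution `x ↦ x*` on arrows of the double quiver. -/
def starArrow : DArrow A → DArrow A := Sum.elim Sum.inr Sum.inl

variable (hd tl : A → V)

/-- Head of a double arrow. -/
def dhd : DArrow A → V := Sum.elim hd tl

/-- Tail of a double arrow. -/
def dtl : DArrow A → V := Sum.elim tl hd

/-- The path `a*` associated to a path `a` (a path is written as the list of its arrows,
in the order of the composition `a₁⋯a_s`). -/
def starPath (l : List (DArrow A)) : List (DArrow A) := (l.map starArrow).reverse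

/-- The head vertex of a path. -/
def fstV (l : List (DArrow A)) : Option V := l.head?.map (dhd hd tl)

/-- The tail vertex of a path. -/
def lstV (l : List (DArrow A)) : Option V := l.getLast?.map (dtl hd tl)

/-- `l` is a path in the double quiver: it is nonempty and consecutive arrows compose
(the tail of each arrow is the head of the next one). -/
def IsPathL (l : List (DArrow A)) : Prop :=
  l ≠ [] ∧ l.Chain' fun x y => dtl hd tl x = dhd hd tl y

/-- `l` is a closed path: a path whose head vertex equals its tail vertex. -/
def IsClosedPath (l : List (DArrow A)) : Prop :=
  IsPathL hd tl l ∧ fstV hd tl l = lstV hd tl l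

/-- The set of arrows occurring in the path `l`. -/
def ArrL (l : List (DArrow A)) : Set (DArrow A) := {x | x ∈ l}

/-- The set of vertices of a set of double arrows. -/
def VerS (S : Set (DArrow A)) : Set V := {v | ∃ x ∈ S, dhd hd tl x = v ∨ dtl hd tl x = v}

/-- The set of vertices occurring in the path `l`. -/
def VerL (l : List (DArrow A)) : Set V := VerS hd tl (ArrL l)

/-- A multilinear path: a closed path in which every double arrow occurs at most once. -/
def IsMultilinear (l : List (DArrow A)) : Prop := IsClosedPath hd tl l ∧ l.Nodup

/-- A primitive closed path: a closed path without self-intersections, i.e. the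
vertices it passes through are pairwise distinct. -/
def IsPrimitive (l : List (DArrow A)) : Prop :=
  IsClosedPath hd tl l ∧ (l.map (dhd hd tl)).Nodup

/-- The multidegree of a path. -/
def mdegL [DecidableEq A] (l : List (DArrow A)) : A → ℕ := fun a =>
  l.count (Sum.inl a) + l.count (Sum.inr a)

/-- A tree path: a multilinear path such that whenever both `x` and `x*` occur
(for `x ∈ Q₁`), the remaining arrows split into two nonempty parts with disjoint
vertex sets. -/
def IsTreePath (l : List (DArrow A)) : Prop :=
  IsMultilinear hd tl l ∧
    ∀ x : A, Sum.inl x ∈ l → Sum.inr x ∈ l →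
      ∃ G L : Set (DArrow A),
        G ∪ L = ArrL l \ {Sum.inl x, Sum.inr x} ∧ Disjoint G L ∧
        G.Nonempty ∧ L.Nonempty ∧ Disjoint (VerS hd tl G) (VerS hd tl L)

/-- A simple tree path: a tree path all of whose arrows occurring without their star
are loops. -/
def IsSimpleTreePath (l : List (DArrow A)) : Prop :=
  IsTreePath hd tl l ∧ ∀ x ∈ l, starArrow x ∉ l → dhd hd tl x = dtl hd tl x

/-- A decomposition of a closed path into primitive closed paths: a family of primitive
closed paths with pairwise disjoint arrow sets whose arrow sets together give the set of
arrows of `l`. -/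
def IsDecomposition (l : List (DArrow A)) (s : ℕ) (b : Fin s → List (DArrow A)) : Prop :=
  (∀ i, IsPrimitive hd tl (b i)) ∧
    (∀ i j, i ≠ j → Disjoint (ArrL (b i)) (ArrL (b j))) ∧
    (⋃ i, ArrL (b i)) = ArrL l

/-- The base relation for the equivalence `∼` on closed paths: `a ∼ a*` and `xy ∼ yx`. -/
def PathRel (l m : List (DArrow A)) : Prop :=
  m = starPath l ∨ ∃ u v : List (DArrow A), l = u ++ v ∧ m = v ++ u

/-- The smallest equivalence with `a ∼ a*` and `xy ∼ yx`. -/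
def PathEquiv : List (DArrow A) → List (DArrow A) → Prop :=
  Relation.EqvGen PathRel

/-- The number of common vertices of the `i`-th and `j`-th member of a family of paths:
the mark of the corresponding edge of the diagram which is the type of a decomposition. -/
noncomputable def interCard (s : ℕ) (b : Fin s → List (DArrow A)) (i j : Fin s) : ℕ :=
  (VerL hd tl (b i) ∩ VerL hd tl (b j)).ncard

/-- Three closed paths form a fan: all pairwise vertex intersections are one and the
same single vertex. -/
def FormFan (l₁ l₂ l₃ : List (DArrow A)) : Prop :=
  ∃ u : V,
    VerL hd tl l₁ ∩ VerL hd tl l₂ = {u} ∧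
    VerL hd tl l₁ ∩ VerL hd tl l₃ = {u} ∧
    VerL hd tl l₂ ∩ VerL hd tl l₃ = {u}

/-- Three closed paths form a chain (with `l₂` in the middle): `l₂ ∼ c₁c₂` for paths
`c₁, c₂` such that both endpoints of `c₁` lie in `Ver l₁` and `Ver c₁ ∩ Ver l₃ = ∅`. -/
def FormChain (l₁ l₂ l₃ : List (DArrow A)) : Prop :=
  ∃ c₁ c₂ : List (DArrow A),
    PathEquiv l₂ (c₁ ++ c₂) ∧ IsPathL hd tl c₁ ∧ IsPathL hd tl c₂ ∧
    (∀ v ∈ fstV hd tl c₁, v ∈ VerL hd tl l₁) ∧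
    (∀ v ∈ lstV hd tl c₁, v ∈ VerL hd tl l₁) ∧
    Disjoint (VerL hd tl c₁) (VerL hd tl l₃)

/-- The diagram (type) of the decomposition `b` is admissible: all edge marks are `1`
or `2` and every cycle of the diagram is a triangle all of whose edges are marked `1`. -/
def AdmissibleDiagram (s : ℕ) (b : Fin s → List (DArrow A)) : Prop :=
  (∀ i j : Fin s, i ≠ j → interCard hd tl s b i j ≤ 2) ∧
    ∀ (k : ℕ) (c : ZMod k → Fin s), 3 ≤ k → Function.Injective c →
      (∀ i : ZMod k, 1 ≤ interCard hd tl s b (c i) (c (i + 1))) →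
      k = 3 ∧ ∀ i : ZMod k, interCard hd tl s b (c i) (c (i + 1)) = 1

/-- The closed path `l` is admissible with respect to the decomposition `b`. -/
def AdmissibleWrt (l : List (DArrow A)) (s : ℕ) (b : Fin s → List (DArrow A)) : Prop :=
  IsDecomposition hd tl l s b ∧ AdmissibleDiagram hd tl s b ∧
    (∀ i j k : Fin s, i ≠ j → j ≠ k → i ≠ k →
      1 ≤ interCard hd tl s b i j → 1 ≤ interCard hd tl s b j k →
      1 ≤ interCard hd tl s b i k → FormFan hd tl (b i) (b j) (b k)) ∧
    ∀ i j k : Fin s, i ≠ j → j ≠ k → i ≠ k →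
      interCard hd tl s b i j = 2 → interCard hd tl s b j k = 2 →
      FormChain hd tl (b i) (b j) (b k)

/-- The closed path `l` is admissible: it is admissible with respect to some
decomposition into primitive closed paths. -/
def IsAdmissible (l : List (DArrow A)) : Prop := ∃ s b, AdmissibleWrt hd tl l s b

variable (F : Type) [Field F]

/-- The coordinate ring `F[H]` of the space of representations of dimension `(2,…,2)`. -/
abbrev PolyR (F A : Type) [Field F] : Type := MvPolynomial (A × Fin 2 × Fin 2) F

/-- The generic `2×2` matrix attached to the arrow `a ∈ Q₁`. -/
noncomputable def genMat (a : A) : Matrix (Fin 2) (Fin 2) (PolyR F A) :=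
  Matrix.of fun i j => MvPolynomial.X (a, i, j)

/-- The matrix `J₂` of the standard skew-symmetric bilinear form. -/
def J2 (R : Type) [Ring R] : Matrix (Fin 2) (Fin 2) R := !![0, 1; -1, 0]

/-- The matrix attached to a double arrow: `X_a` for `a ∈ Q₁` and
`X_{a*} = -J₂ X_aᵀ J₂`. -/
noncomputable def XArr : DArrow A → Matrix (Fin 2) (Fin 2) (PolyR F A) :=
  Sum.elim (genMat F) fun a => -(J2 (PolyR F A) * (genMat F a)ᵀ * J2 (PolyR F A))

/-- The matrix `X_b` of a path `b = b₁⋯b_s` in the double quiver. -/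
noncomputable def XPath (l : List (DArrow A)) : Matrix (Fin 2) (Fin 2) (PolyR F A) :=
  (l.map (XArr F)).prod

/-- The action of a family `g` of `2×2`-matrices on the coordinate ring:
`x^a_{ij} ↦ (i,j)`-entry of `g_{a'}⁻¹ X_a g_{a''}`. -/
noncomputable def actHom (g : V → Matrix (Fin 2) (Fin 2) F) :
    PolyR F A →ₐ[F] PolyR F A :=
  MvPolynomial.aeval fun p : A × Fin 2 × Fin 2 =>
    (((g (hd p.1))⁻¹).map (algebraMap F (PolyR F A)) * genMat F p.1 *
        (g (tl p.1)).map (algebraMap F (PolyR F A)))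
      p.2.1 p.2.2

/-- The algebra of semi-invariants `SI(Q)`: the elements of `F[H]` fixed by every
family `g = (g_v)` of matrices of determinant one. -/
noncomputable def SIalg : Subalgebra F (PolyR F A) :=
  ⨅ g : {g : V → Matrix (Fin 2) (Fin 2) F // ∀ v, (g v).det = 1},
    AlgHom.equalizer (actHom hd tl F g.1) (AlgHom.id F (PolyR F A))

/-- The augmentation ideal `SI(Q)⁺` of semi-invariants without constant term
(equivalently, the ideal generated by the homogeneous elements of positive degree). -/
noncomputable def augIdeal : Ideal (SIalg hd tl F) :=
  RingHom.ker (MvPolynomial.constantCoeff.comp (SIalg hd tl F).val.toRingHom)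

/-- A semi-invariant is decomposable (`≡ 0`) if it lies in the ideal `(SI(Q)⁺)²`. -/
def Decomposable (f : PolyR F A) : Prop :=
  f ∈ (SIalg hd tl F).val ''
      ((augIdeal hd tl F * augIdeal hd tl F : Ideal (SIalg hd tl F)) : Set (SIalg hd tl F))

end QuiverSemiInvariants


section Aux

open Matrix MvPolynomial

variable {V A : Type}

namespace SIAux

/-- The `2×2` adjugate written as `tr M • 1 - M`. -/
def adj2 {R : Type} [CommRing R] (M : Matrix (Fin 2) (Fin 2) R) :
    Matrix (Fin 2) (Fin 2) R := M.trace • (1 : Matrix (Fin 2) (Fin 2) R) - M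

variable {R S : Type} [CommRing R] [CommRing S]

lemma adj2_eq_adjugate (M : Matrix (Fin 2) (Fin 2) R) : adj2 M = M.adjugate := by
  rw [Matrix.adjugate_fin_two]
  ext i j
  fin_cases i <;> fin_cases j <;>
    simp [adj2, Matrix.trace_fin_two, Matrix.one_apply] <;> ring

lemma adj2_one : adj2 (1 : Matrix (Fin 2) (Fin 2) R) = 1 := by
  rw [adj2_eq_adjugate, Matrix.adjugate_one]

lemma trace_adj2 (M : Matrix (Fin 2) (Fin 2) R) : (adj2 M).trace = M.trace := by
  simp only [adj2, Matrix.trace_fin_two, Matrix.sub_apply, Matrix.smul_apply,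
    Matrix.one_apply_eq, smul_eq_mul, mul_one]
  ring

lemma adj2_adj2 (M : Matrix (Fin 2) (Fin 2) R) : adj2 (adj2 M) = M := by
  show (adj2 M).trace • (1 : Matrix (Fin 2) (Fin 2) R) - adj2 M = M
  rw [trace_adj2]
  show M.trace • (1 : Matrix (Fin 2) (Fin 2) R) -
    (M.trace • (1 : Matrix (Fin 2) (Fin 2) R) - M) = M
  exact sub_sub_cancel _ _

lemma adj2_mul (M N : Matrix (Fin 2) (Fin 2) R) : adj2 (M * N) = adj2 N * adj2 M := by
  rw [adj2_eq_adjugate, adj2_eq_adjugate, adj2_eq_adjugate, Matrix.adjugate_mul_distrib]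

lemma negJ (M : Matrix (Fin 2) (Fin 2) R) :
    -(J2 R * Mᵀ * J2 R) = adj2 M := by
  ext i j
  fin_cases i <;> fin_cases j <;>
    simp [adj2, J2, Matrix.trace_fin_two, Matrix.one_apply, Matrix.mul_apply,
      Fin.sum_univ_two, Matrix.vecMul, Matrix.vecHead, Matrix.vecTail, dotProduct,
      Matrix.transpose_apply]

lemma sandwich (P M W Z Q N : Matrix (Fin 2) (Fin 2) R) (h : W * Z = 1) :
    P * M * W * (Z * Q * N) = P * (M * Q) * N := by
  have h1 : W * (Z * (Q * N)) = Q * N := by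
    rw [← Matrix.mul_assoc, h, Matrix.one_mul]
  calc P * M * W * (Z * Q * N) = P * M * (W * (Z * (Q * N))) := by
        simp only [Matrix.mul_assoc]
    _ = P * M * (Q * N) := by rw [h1]
    _ = P * (M * Q) * N := by simp only [Matrix.mul_assoc]

lemma trace_map (f : R →+* S) (M : Matrix (Fin 2) (Fin 2) R) :
    (M.map f).trace = f M.trace := by
  simp [Matrix.trace_fin_two, Matrix.map_apply]

lemma adj2_map (f : R →+* S) (M : Matrix (Fin 2) (Fin 2) R) :
    adj2 (M.map f) = (adj2 M).map f := by
  ext i j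
  fin_cases i <;> fin_cases j <;>
    simp [adj2, Matrix.trace_fin_two, Matrix.one_apply, Matrix.map_apply]

/-- The 2×2 trace identity behind relation `R₁`. -/
lemma traceid1 (A B C D : Matrix (Fin 2) (Fin 2) R) :
    2 * (A * B * C * D).trace =
      (A.trace * (B * C * D).trace + B.trace * (A * C * D).trace
        + (A * B).trace * (C * D).trace - A.trace * B.trace * (C * D).trace)
      - (A.trace * (D * B * C).trace + C.trace * (D * B * A).trace
        + (A * C).trace * (D * B).trace - A.trace * C.trace * (D * B).trace)
      + (A.trace * (B * C * D).trace + D.trace * (B * C * A).trace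
        + (A * D).trace * (B * C).trace - A.trace * D.trace * (B * C).trace) := by
  simp only [Matrix.trace_fin_two, Matrix.mul_apply, Fin.sum_univ_two]
  ring

/-- The 2×2 trace identity behind relation `R₂`. -/
lemma traceid2 (X1 Y1 X2 Y2 C : Matrix (Fin 2) (Fin 2) R) :
    2 * (X1 * Y1 * (X2 * Y2) * C).trace =
      (Y1 * X2).trace * (X1 * Y2 * C).trace
      + (Y2 * X1).trace * (adj2 X2 * C * adj2 Y1).trace
      - ((X1 * adj2 X2).trace * (adj2 Y1 * Y2 * C).trace
        + (adj2 Y1 * Y2).trace * (X1 * adj2 X2 * C).trace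
        + C.trace * (X1 * adj2 X2 * adj2 Y1 * Y2).trace
        - (X1 * adj2 X2).trace * (adj2 Y1 * Y2).trace * C.trace)
      - ((adj2 Y1 * adj2 X1).trace * (C * adj2 Y2 * adj2 X2).trace
        + (adj2 Y2 * adj2 X2).trace * (C * adj2 Y1 * adj2 X1).trace
        - C.trace * (adj2 Y1 * adj2 X1).trace * (adj2 Y2 * adj2 X2).trace) := by
  simp only [adj2, Matrix.trace_fin_two, Matrix.mul_apply, Fin.sum_univ_two,
    Matrix.sub_apply, Matrix.smul_apply, Matrix.one_apply, smul_eq_mul]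
  norm_num
  ring

section Paths

variable (hd tl : A → V)

lemma dhd_star (x : DArrow A) : dhd hd tl (starArrow x) = dtl hd tl x := by
  cases x <;> rfl

lemma dtl_star (x : DArrow A) : dtl hd tl (starArrow x) = dhd hd tl x := by
  cases x <;> rfl

/-- `l` is a path from `u` to `u'`. -/
def PathFT (l : List (DArrow A)) (u u' : V) : Prop :=
  IsPathL hd tl l ∧ fstV hd tl l = some u ∧ lstV hd tl l = some u'

lemma fstV_append {l m : List (DArrow A)} (hl : l ≠ []) :
    fstV hd tl (l ++ m) = fstV hd tl l := by
  cases l with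
  | nil => exact absurd rfl hl
  | cons x xs => rfl

lemma lstV_append {l m : List (DArrow A)} (hm : m ≠ []) :
    lstV hd tl (l ++ m) = lstV hd tl m := by
  unfold lstV
  rw [List.getLast?_append_of_ne_nil l hm]

lemma pathFT_append {l m : List (DArrow A)} {u w u' : V}
    (hl : PathFT hd tl l u w) (hm : PathFT hd tl m w u') :
    PathFT hd tl (l ++ m) u u' := by
  obtain ⟨⟨hlne, hlch⟩, hlf, hll⟩ := hl
  obtain ⟨⟨hmne, hmch⟩, hmf, hml⟩ := hm
  refine ⟨⟨by simp [hlne], ?_⟩, ?_, ?_⟩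
  · unfold List.Chain'; rw [List.isChain_append]
    refine ⟨hlch, hmch, ?_⟩
    intro x hx y hy
    have hx' : dtl hd tl x = w := by
      unfold lstV at hll
      rw [hx] at hll
      simpa using hll
    have hy' : dhd hd tl y = w := by
      unfold fstV at hmf
      rw [hy] at hmf
      simpa using hmf
    rw [hx', hy']
  · rw [fstV_append hd tl hlne]; exact hlf
  · rw [lstV_append hd tl hmne]; exact hml

lemma fstV_of_append_chain {l m : List (DArrow A)} {w : V}
    (hch : (l ++ m).Chain' fun x y => dtl hd tl x = dhd hd tl y)
    (hl : lstV hd tl l = some w) (hm : m ≠ []) :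
    fstV hd tl m = some w := by
  obtain ⟨_, _, hmid⟩ := List.isChain_append.mp hch
  unfold lstV at hl
  obtain ⟨x, hx, hxw⟩ : ∃ x, l.getLast? = some x ∧ dtl hd tl x = w := by
    cases h : l.getLast? with
    | none => rw [h] at hl; simp at hl
    | some x => rw [h] at hl; exact ⟨x, rfl, by simpa using hl⟩
  cases m with
  | nil => exact absurd rfl hm
  | cons y ys =>
    have := hmid x hx y (by simp)
    unfold fstV
    simp [← hxw, ← this]

lemma starPath_pathFT {l : List (DArrow A)} {u u' : V}
    (h : PathFT hd tl l u u') : PathFT hd tl (starPath l) u' u := by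
  obtain ⟨⟨hne, hch⟩, hf, hl⟩ := h
  have hmapne : l.map (starArrow (A := A)) ≠ [] := by simpa using hne
  refine ⟨⟨by simpa [starPath] using hne, ?_⟩, ?_, ?_⟩
  · unfold starPath
    unfold List.Chain'; rw [List.isChain_reverse, List.isChain_map]
    refine hch.imp ?_
    intro x y hxy
    show dtl hd tl (starArrow y) = dhd hd tl (starArrow x)
    rw [dtl_star, dhd_star, hxy]
  · unfold fstV starPath
    rw [List.head?_reverse]
    have : (l.map (starArrow (A := A))).getLast? = l.getLast?.map starArrow := by
      rw [← List.head?_reverse, ← List.map_reverse, List.head?_map, List.head?_reverse]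
    rw [this, Option.map_map]
    unfold lstV at hl
    have : (dhd hd tl ∘ starArrow (A := A)) = dtl hd tl := by
      funext x; exact dhd_star hd tl x
    rw [this]; exact hl
  · unfold lstV starPath
    rw [List.getLast?_reverse, List.head?_map, Option.map_map]
    have : (dtl hd tl ∘ starArrow (A := A)) = dhd hd tl := by
      funext x; exact dtl_star hd tl x
    rw [this]; exact hf

lemma pathFT_of_closed {l : List (DArrow A)} {u : V}
    (hc : IsClosedPath hd tl l) (hf : fstV hd tl l = some u) :
    PathFT hd tl l u u :=
  ⟨hc.1, hf, hc.2 ▸ hf⟩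

end Paths

section XP

variable (F : Type) [Field F]

lemma XPath_nil : XPath F ([] : List (DArrow A)) = 1 := rfl

lemma XPath_cons (x : DArrow A) (l : List (DArrow A)) :
    XPath F (x :: l) = XArr F x * XPath F l := by
  simp [XPath]

lemma XPath_singleton (x : DArrow A) : XPath F [x] = XArr F x := by
  simp [XPath]

lemma XPath_append (l m : List (DArrow A)) :
    XPath F (l ++ m) = XPath F l * XPath F m := by
  simp [XPath]

lemma XArr_star (x : DArrow A) : XArr F (starArrow x) = adj2 (XArr F x) := by
  cases x with
  | inl a =>
    show XArr F (Sum.inr a) = adj2 (genMat F a)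
    rw [← negJ]
    rfl
  | inr a =>
    show genMat F a = adj2 (XArr F (Sum.inr a))
    have : XArr F (Sum.inr a) = adj2 (genMat F a) := by rw [← negJ]; rfl
    rw [this, adj2_adj2]

lemma XPath_star (l : List (DArrow A)) :
    XPath F (starPath l) = adj2 (XPath F l) := by
  induction l with
  | nil => simp [starPath, XPath_nil, adj2_one]
  | cons x xs ih =>
    have : starPath (x :: xs) = starPath xs ++ [starArrow x] := by
      simp [starPath]
    rw [this, XPath_append, XPath_singleton, ih, XArr_star, XPath_cons, adj2_mul]

end XP

section Inv

variable (hd tl : A → V) (F : Type) [Field F]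
variable (g : V → Matrix (Fin 2) (Fin 2) F)

/-- `g u` mapped into the polynomial ring. -/
noncomputable def Gm (u : V) : Matrix (Fin 2) (Fin 2) (PolyR F A) :=
  (g u).map (algebraMap F (PolyR F A))

/-- `(g u)⁻¹` mapped into the polynomial ring. -/
noncomputable def Gi (u : V) : Matrix (Fin 2) (Fin 2) (PolyR F A) :=
  ((g u)⁻¹).map (algebraMap F (PolyR F A))

lemma inv_eq_adj2 (hg : ∀ u, (g u).det = 1) (u : V) : (g u)⁻¹ = adj2 (g u) := by
  rw [Matrix.inv_def, hg u, adj2_eq_adjugate, Ring.inverse_one, one_smul]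

lemma adj2_Gm (hg : ∀ u, (g u).det = 1) (u : V) : adj2 (Gm (A := A) F g u) = Gi F g u := by
  unfold Gm Gi
  rw [adj2_map, inv_eq_adj2 F g hg u]

lemma adj2_Gi (hg : ∀ u, (g u).det = 1) (u : V) : adj2 (Gi (A := A) F g u) = Gm F g u := by
  rw [← adj2_Gm (A := A) F g hg u, adj2_adj2]

lemma Gm_mul_Gi (hg : ∀ u, (g u).det = 1) (u : V) : Gm (A := A) F g u * Gi F g u = 1 := by
  unfold Gm Gi
  rw [← Matrix.map_mul, Matrix.mul_nonsing_inv _ (by rw [hg u]; exact isUnit_one)]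
  simp
  exact Matrix.map_one _ (map_zero _) (map_one _)

lemma act_genMat (a : A) :
    (genMat F a).map (actHom hd tl F g) =
      Gi (A := A) F g (hd a) * genMat F a * Gm F g (tl a) := by
  ext i j
  simp [genMat, Matrix.map_apply, actHom, Gm, Gi]

lemma J2_map : (J2 (PolyR F A)).map (actHom hd tl F g) = J2 (PolyR F A) := by
  ext i j
  fin_cases i <;> fin_cases j <;> simp [J2, Matrix.map_apply]

lemma act_XArr (hg : ∀ u, (g u).det = 1) (x : DArrow A) :
    (XArr F x).map (actHom hd tl F g) =
      Gi (A := A) F g (dhd hd tl x) * XArr F x * Gm F g (dtl hd tl x) := by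
  cases x with
  | inl a => exact act_genMat hd tl F g a
  | inr a =>
    show (-(J2 (PolyR F A) * (genMat F a)ᵀ * J2 (PolyR F A))).map (actHom hd tl F g)
      = Gi (A := A) F g (tl a) * XArr F (Sum.inr a) * Gm F g (hd a)
    have hmm : ∀ M N : Matrix (Fin 2) (Fin 2) (PolyR F A),
        (M * N).map (actHom hd tl F g) =
          M.map (actHom hd tl F g) * N.map (actHom hd tl F g) := by
      intro M N
      exact Matrix.map_mul
    have hneg : ∀ M : Matrix (Fin 2) (Fin 2) (PolyR F A),
        (-M).map (actHom hd tl F g) = -(M.map (actHom hd tl F g)) := by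
      intro M; ext i j; simp [Matrix.map_apply]
    have htr : ((genMat F a)ᵀ).map (actHom hd tl F g) =
        ((genMat F a).map (actHom hd tl F g))ᵀ := by
      ext i j; simp [Matrix.map_apply, Matrix.transpose_apply]
    rw [hneg, hmm, hmm, J2_map, htr, act_genMat, negJ]
    rw [adj2_mul, adj2_mul, adj2_Gm (A := A) F g hg, adj2_Gi (A := A) F g hg]
    have hX : XArr F (Sum.inr a) = adj2 (genMat F a) := by
      show -(J2 (PolyR F A) * (genMat F a)ᵀ * J2 (PolyR F A)) = adj2 (genMat F a)
      exact negJ _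
    rw [hX]
    exact (Matrix.mul_assoc _ _ _).symm

lemma act_XPath (hg : ∀ u, (g u).det = 1) (l : List (DArrow A))
    (hch : l.Chain' fun x y => dtl hd tl x = dhd hd tl y) :
    ∀ u u', fstV hd tl l = some u → lstV hd tl l = some u' →
    (XPath F l).map (actHom hd tl F g) =
      Gi (A := A) F g u * XPath F l * Gm F g u' := by
  induction l with
  | nil => intro u u' h1; simp [fstV] at h1
  | cons x xs ih =>
    intro u u' h1 h2
    have hu : dhd hd tl x = u := by
      unfold fstV at h1; simpa using h1
    cases xs with
    | nil =>
      have hu' : dtl hd tl x = u' := by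
        unfold lstV at h2; simpa using h2
      rw [XPath_singleton, act_XArr hd tl F g hg, hu, hu']
    | cons y ys =>
      have hch' : (y :: ys).Chain' fun x y => dtl hd tl x = dhd hd tl y :=
        (List.isChain_cons_cons.mp hch).2
      have hxy : dtl hd tl x = dhd hd tl y := (List.isChain_cons_cons.mp hch).1
      have h2' : lstV hd tl (y :: ys) = some u' := by
        unfold lstV at h2 ⊢
        rwa [List.getLast?_cons_cons] at h2
      have ihh := ih hch' (dhd hd tl y) u' rfl h2'
      have hmm : ∀ M N : Matrix (Fin 2) (Fin 2) (PolyR F A),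
          (M * N).map (actHom hd tl F g) =
            M.map (actHom hd tl F g) * N.map (actHom hd tl F g) := by
        intro M N
        exact Matrix.map_mul
      rw [XPath_cons, hmm, act_XArr hd tl F g hg, ihh, hu, hxy, XPath_cons]
      exact sandwich _ _ _ _ _ _ (Gm_mul_Gi F g hg _)

lemma act_trace (hg : ∀ u, (g u).det = 1) {l : List (DArrow A)} {u : V}
    (h : PathFT hd tl l u u) :
    actHom hd tl F g (XPath F l).trace = (XPath F l).trace := by
  obtain ⟨⟨hne, hch⟩, hf, hl⟩ := h
  have hmap : ((XPath F l).map (actHom hd tl F g)).trace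
      = actHom hd tl F g (XPath F l).trace :=
    trace_map (actHom hd tl F g).toRingHom (XPath F l)
  rw [← hmap, act_XPath hd tl F g hg l hch u u hf hl]
  rw [Matrix.trace_mul_cycle, Gm_mul_Gi F g hg, Matrix.one_mul]

end Inv

section Mem

variable (hd tl : A → V) (F : Type) [Field F]

lemma trace_mem_SI {l : List (DArrow A)} {u : V} (h : PathFT hd tl l u u) :
    (XPath F l).trace ∈ SIalg hd tl F := by
  rw [SIalg, Algebra.mem_iInf]
  rintro ⟨g, hg⟩
  exact act_trace hd tl F g hg h

lemma cc_XArr (x : DArrow A) :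
    (XArr F x).map (constantCoeff : PolyR F A →+* F) = 0 := by
  cases x with
  | inl a =>
    ext i j
    simp [XArr, genMat, Matrix.map_apply]
  | inr a =>
    show (-(J2 (PolyR F A) * (genMat F a)ᵀ * J2 (PolyR F A))).map
        (constantCoeff : PolyR F A →+* F) = 0
    ext i j
    fin_cases i <;> fin_cases j <;>
      simp [Matrix.map_apply, Matrix.mul_apply, Fin.sum_univ_two, J2, genMat,
        Matrix.transpose_apply, Matrix.vecMul, Matrix.vecHead, Matrix.vecTail,
        dotProduct, Matrix.neg_apply]

lemma cc_trace {l : List (DArrow A)} (hne : l ≠ []) :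
    constantCoeff (XPath F l).trace = 0 := by
  cases l with
  | nil => exact absurd rfl hne
  | cons x xs =>
    rw [← trace_map (constantCoeff : PolyR F A →+* F)]
    rw [XPath_cons, Matrix.map_mul, cc_XArr, Matrix.zero_mul, Matrix.trace_zero]

/-- `f` is the image of an element of the augmentation ideal. -/
def ElI (f : PolyR F A) : Prop :=
  f ∈ (SIalg hd tl F).val '' (augIdeal hd tl F : Set (SIalg hd tl F))

lemma elI_trace {l : List (DArrow A)} {u : V} (h : PathFT hd tl l u u) :
    ElI hd tl F (XPath F l).trace := by
  refine ⟨⟨(XPath F l).trace, trace_mem_SI hd tl F h⟩, ?_, rfl⟩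
  show _ ∈ augIdeal hd tl F
  rw [augIdeal, RingHom.mem_ker]
  exact cc_trace F h.1.1

lemma elI_mul {p q : PolyR F A} (hp : ElI hd tl F p) (hq : ElI hd tl F q) :
    ElI hd tl F (p * q) := by
  obtain ⟨p0, hp0, rfl⟩ := hp
  obtain ⟨q0, hq0, rfl⟩ := hq
  exact ⟨p0 * q0, Ideal.mul_mem_left _ _ hq0, rfl⟩

lemma dec_mul {p q : PolyR F A} (hp : ElI hd tl F p) (hq : ElI hd tl F q) :
    Decomposable hd tl F (p * q) := by
  obtain ⟨p0, hp0, rfl⟩ := hp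
  obtain ⟨q0, hq0, rfl⟩ := hq
  exact ⟨p0 * q0, Ideal.mul_mem_mul hp0 hq0, rfl⟩

lemma dec_add {p q : PolyR F A} (hp : Decomposable hd tl F p)
    (hq : Decomposable hd tl F q) : Decomposable hd tl F (p + q) := by
  obtain ⟨p0, hp0, rfl⟩ := hp
  obtain ⟨q0, hq0, rfl⟩ := hq
  exact ⟨p0 + q0, add_mem hp0 hq0, rfl⟩

lemma dec_sub {p q : PolyR F A} (hp : Decomposable hd tl F p)
    (hq : Decomposable hd tl F q) : Decomposable hd tl F (p - q) := by
  obtain ⟨p0, hp0, rfl⟩ := hp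
  obtain ⟨q0, hq0, rfl⟩ := hq
  exact ⟨p0 - q0, sub_mem hp0 hq0, rfl⟩

lemma dec_of_two_mul (h2 : (2 : F) ≠ 0) {f : PolyR F A}
    (h : Decomposable hd tl F ((2 : PolyR F A) * f)) : Decomposable hd tl F f := by
  obtain ⟨g0, hg0, hval⟩ := h
  refine ⟨algebraMap F (SIalg hd tl F) (2⁻¹ : F) * g0,
    Ideal.mul_mem_left _ _ hg0, ?_⟩
  have : ((SIalg hd tl F).val : SIalg hd tl F →ₐ[F] PolyR F A)
      (algebraMap F (SIalg hd tl F) (2⁻¹ : F) * g0)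
      = algebraMap F (PolyR F A) (2⁻¹ : F) * ((2 : PolyR F A) * f) := by
    rw [_root_.map_mul, AlgHom.commutes, hval]
  rw [this, ← mul_assoc]
  have h2' : (2 : PolyR F A) = algebraMap F (PolyR F A) (2 : F) := by
    rw [map_ofNat]
  rw [h2', ← _root_.map_mul, inv_mul_cancel₀ h2, _root_.map_one, one_mul]

end Mem

end SIAux

end Aux

set_option maxHeartbeats 10000000 in
/-- Lemma 4, relations `R₁` and `R₂` for `char F ≠ 2`. -/
theorem statement6 (F : Type) [Field F] [Infinite F] (hchar : ringChar F ≠ 2)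
    {V A : Type} [Fintype V] [Fintype A] (hd tl : A → V) (v : V) :
    -- (R₁) tr(abcd) ≡ 0
    (∀ a b c d : List (DArrow A),
      IsClosedPath hd tl a → IsClosedPath hd tl b → IsClosedPath hd tl c →
      IsClosedPath hd tl d →
      fstV hd tl a = some v → fstV hd tl b = some v → fstV hd tl c = some v →
      fstV hd tl d = some v →
      Decomposable hd tl F ((XPath F (a ++ b ++ c ++ d)).trace)) ∧
    -- (R₂) tr(abc) ≡ 0 when a and b intersect at a vertex w ≠ v
    (∀ a b c : List (DArrow A),
      IsClosedPath hd tl a → IsClosedPath hd tl b → IsClosedPath hd tl c →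
      fstV hd tl a = some v → fstV hd tl b = some v → fstV hd tl c = some v →
      ∀ x₁ y₁ x₂ y₂ : List (DArrow A), a = x₁ ++ y₁ → b = x₂ ++ y₂ →
        IsPathL hd tl x₁ → IsPathL hd tl y₁ → IsPathL hd tl x₂ → IsPathL hd tl y₂ →
        ∀ w : V, lstV hd tl x₁ = some w → lstV hd tl x₂ = some w → w ≠ v →
        Decomposable hd tl F ((XPath F (a ++ b ++ c)).trace)) := by
  have h2 : (2 : F) ≠ 0 := Ring.two_ne_zero hchar
  constructor
  · -- (R₁)
    intro a b c d hca hcb hcc hcd hfa hfb hfc hfd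
    have hpa : SIAux.PathFT hd tl a v v := SIAux.pathFT_of_closed hd tl hca hfa
    have hpb : SIAux.PathFT hd tl b v v := SIAux.pathFT_of_closed hd tl hcb hfb
    have hpc : SIAux.PathFT hd tl c v v := SIAux.pathFT_of_closed hd tl hcc hfc
    have hpd : SIAux.PathFT hd tl d v v := SIAux.pathFT_of_closed hd tl hcd hfd
    have app : ∀ {l m : List (DArrow A)}, SIAux.PathFT hd tl l v v →
        SIAux.PathFT hd tl m v v → SIAux.PathFT hd tl (l ++ m) v v :=
      fun hl hm => SIAux.pathFT_append hd tl hl hm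
    have el : ∀ {l : List (DArrow A)}, SIAux.PathFT hd tl l v v →
        SIAux.ElI hd tl F (XPath F l).trace :=
      fun h => SIAux.elI_trace hd tl F h
    have key : (2 : PolyR F A) * (XPath F (a ++ b ++ c ++ d)).trace =
        ((XPath F a).trace * (XPath F (b ++ c ++ d)).trace
          + (XPath F b).trace * (XPath F (a ++ c ++ d)).trace
          + (XPath F (a ++ b)).trace * (XPath F (c ++ d)).trace
          - (XPath F a).trace * (XPath F b).trace * (XPath F (c ++ d)).trace)
        - ((XPath F a).trace * (XPath F (d ++ b ++ c)).trace
          + (XPath F c).trace * (XPath F (d ++ b ++ a)).trace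
          + (XPath F (a ++ c)).trace * (XPath F (d ++ b)).trace
          - (XPath F a).trace * (XPath F c).trace * (XPath F (d ++ b)).trace)
        + ((XPath F a).trace * (XPath F (b ++ c ++ d)).trace
          + (XPath F d).trace * (XPath F (b ++ c ++ a)).trace
          + (XPath F (a ++ d)).trace * (XPath F (b ++ c)).trace
          - (XPath F a).trace * (XPath F d).trace * (XPath F (b ++ c)).trace) := by
      simp only [SIAux.XPath_append]
      exact SIAux.traceid1 _ _ _ _
    apply SIAux.dec_of_two_mul hd tl F h2
    rw [key]
    refine SIAux.dec_add hd tl F (SIAux.dec_sub hd tl F ?_ ?_) ?_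
    · refine SIAux.dec_sub hd tl F (SIAux.dec_add hd tl F (SIAux.dec_add hd tl F
        ?_ ?_) ?_) ?_
      · exact SIAux.dec_mul hd tl F (el hpa) (el (app (app hpb hpc) hpd))
      · exact SIAux.dec_mul hd tl F (el hpb) (el (app (app hpa hpc) hpd))
      · exact SIAux.dec_mul hd tl F (el (app hpa hpb)) (el (app hpc hpd))
      · exact SIAux.dec_mul hd tl F (SIAux.elI_mul hd tl F (el hpa) (el hpb))
          (el (app hpc hpd))
    · refine SIAux.dec_sub hd tl F (SIAux.dec_add hd tl F (SIAux.dec_add hd tl F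
        ?_ ?_) ?_) ?_
      · exact SIAux.dec_mul hd tl F (el hpa) (el (app (app hpd hpb) hpc))
      · exact SIAux.dec_mul hd tl F (el hpc) (el (app (app hpd hpb) hpa))
      · exact SIAux.dec_mul hd tl F (el (app hpa hpc)) (el (app hpd hpb))
      · exact SIAux.dec_mul hd tl F (SIAux.elI_mul hd tl F (el hpa) (el hpc))
          (el (app hpd hpb))
    · refine SIAux.dec_sub hd tl F (SIAux.dec_add hd tl F (SIAux.dec_add hd tl F
        ?_ ?_) ?_) ?_
      · exact SIAux.dec_mul hd tl F (el hpa) (el (app (app hpb hpc) hpd))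
      · exact SIAux.dec_mul hd tl F (el hpd) (el (app (app hpb hpc) hpa))
      · exact SIAux.dec_mul hd tl F (el (app hpa hpd)) (el (app hpb hpc))
      · exact SIAux.dec_mul hd tl F (SIAux.elI_mul hd tl F (el hpa) (el hpd))
          (el (app hpb hpc))
  · -- (R₂)
    intro a b c hca hcb hcc hfa hfb hfc x₁ y₁ x₂ y₂ hax hbx hpx1 hpy1 hpx2 hpy2
      w hw1 hw2 hwv
    subst hax
    subst hbx
    have hpc : SIAux.PathFT hd tl c v v := SIAux.pathFT_of_closed hd tl hcc hfc
    -- the pieces of a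
    have hfx1 : fstV hd tl x₁ = some v := by
      rwa [SIAux.fstV_append hd tl hpx1.1] at hfa
    have hX1 : SIAux.PathFT hd tl x₁ v w := ⟨hpx1, hfx1, hw1⟩
    have hfy1 : fstV hd tl y₁ = some w :=
      SIAux.fstV_of_append_chain hd tl hca.1.2 hw1 hpy1.1
    have hly1 : lstV hd tl y₁ = some v := by
      have := hca.2
      rw [hfa, SIAux.lstV_append hd tl hpy1.1] at this
      exact this.symm
    have hY1 : SIAux.PathFT hd tl y₁ w v := ⟨hpy1, hfy1, hly1⟩
    -- the pieces of b
    have hfx2 : fstV hd tl x₂ = some v := by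
      rwa [SIAux.fstV_append hd tl hpx2.1] at hfb
    have hX2 : SIAux.PathFT hd tl x₂ v w := ⟨hpx2, hfx2, hw2⟩
    have hfy2 : fstV hd tl y₂ = some w :=
      SIAux.fstV_of_append_chain hd tl hcb.1.2 hw2 hpy2.1
    have hly2 : lstV hd tl y₂ = some v := by
      have := hcb.2
      rw [hfb, SIAux.lstV_append hd tl hpy2.1] at this
      exact this.symm
    have hY2 : SIAux.PathFT hd tl y₂ w v := ⟨hpy2, hfy2, hly2⟩
    -- stars
    have hX1s : SIAux.PathFT hd tl (starPath x₁) w v := SIAux.starPath_pathFT hd tl hX1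
    have hY1s : SIAux.PathFT hd tl (starPath y₁) v w := SIAux.starPath_pathFT hd tl hY1
    have hX2s : SIAux.PathFT hd tl (starPath x₂) w v := SIAux.starPath_pathFT hd tl hX2
    have hY2s : SIAux.PathFT hd tl (starPath y₂) v w := SIAux.starPath_pathFT hd tl hY2
    have app : ∀ {l m : List (DArrow A)} {p q r : V}, SIAux.PathFT hd tl l p q →
        SIAux.PathFT hd tl m q r → SIAux.PathFT hd tl (l ++ m) p r :=
      fun hl hm => SIAux.pathFT_append hd tl hl hm
    have el : ∀ {l : List (DArrow A)} {u : V}, SIAux.PathFT hd tl l u u →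
        SIAux.ElI hd tl F (XPath F l).trace :=
      fun h => SIAux.elI_trace hd tl F h
    -- the path facts for all words appearing in the identity
    have h1 : SIAux.PathFT hd tl (y₁ ++ x₂) w w := app hY1 hX2
    have h2' : SIAux.PathFT hd tl (x₁ ++ y₂ ++ c) v v := app (app hX1 hY2) hpc
    have h3 : SIAux.PathFT hd tl (y₂ ++ x₁) w w := app hY2 hX1
    have h4 : SIAux.PathFT hd tl (starPath x₂ ++ c ++ starPath y₁) w w :=
      app (app hX2s hpc) hY1s
    have h5 : SIAux.PathFT hd tl (x₁ ++ starPath x₂) v v := app hX1 hX2s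
    have h6 : SIAux.PathFT hd tl (starPath y₁ ++ y₂ ++ c) v v :=
      app (app hY1s hY2) hpc
    have h7 : SIAux.PathFT hd tl (starPath y₁ ++ y₂) v v := app hY1s hY2
    have h8 : SIAux.PathFT hd tl (x₁ ++ starPath x₂ ++ c) v v :=
      app (app hX1 hX2s) hpc
    have h10 : SIAux.PathFT hd tl (x₁ ++ starPath x₂ ++ starPath y₁ ++ y₂) v v :=
      app (app (app hX1 hX2s) hY1s) hY2
    have h11 : SIAux.PathFT hd tl (starPath y₁ ++ starPath x₁) v v := app hY1s hX1s
    have h12 : SIAux.PathFT hd tl (c ++ starPath y₂ ++ starPath x₂) v v :=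
      app (app hpc hY2s) hX2s
    have h13 : SIAux.PathFT hd tl (starPath y₂ ++ starPath x₂) v v := app hY2s hX2s
    have h14 : SIAux.PathFT hd tl (c ++ starPath y₁ ++ starPath x₁) v v :=
      app (app hpc hY1s) hX1s
    have key : (2 : PolyR F A) * (XPath F (x₁ ++ y₁ ++ (x₂ ++ y₂) ++ c)).trace =
        (XPath F (y₁ ++ x₂)).trace * (XPath F (x₁ ++ y₂ ++ c)).trace
        + (XPath F (y₂ ++ x₁)).trace *
            (XPath F (starPath x₂ ++ c ++ starPath y₁)).trace
        - ((XPath F (x₁ ++ starPath x₂)).trace *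
              (XPath F (starPath y₁ ++ y₂ ++ c)).trace
          + (XPath F (starPath y₁ ++ y₂)).trace *
              (XPath F (x₁ ++ starPath x₂ ++ c)).trace
          + (XPath F c).trace *
              (XPath F (x₁ ++ starPath x₂ ++ starPath y₁ ++ y₂)).trace
          - (XPath F (x₁ ++ starPath x₂)).trace * (XPath F (starPath y₁ ++ y₂)).trace
              * (XPath F c).trace)
        - ((XPath F (starPath y₁ ++ starPath x₁)).trace *
              (XPath F (c ++ starPath y₂ ++ starPath x₂)).trace
          + (XPath F (starPath y₂ ++ starPath x₂)).trace *
              (XPath F (c ++ starPath y₁ ++ starPath x₁)).trace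
          - (XPath F c).trace * (XPath F (starPath y₁ ++ starPath x₁)).trace
              * (XPath F (starPath y₂ ++ starPath x₂)).trace) := by
      simp only [SIAux.XPath_append, SIAux.XPath_star]
      exact SIAux.traceid2 _ _ _ _ _
    apply SIAux.dec_of_two_mul hd tl F h2
    rw [key]
    refine SIAux.dec_sub hd tl F (SIAux.dec_sub hd tl F (SIAux.dec_add hd tl F
      ?_ ?_) ?_) ?_
    · exact SIAux.dec_mul hd tl F (el h1) (el h2')
    · exact SIAux.dec_mul hd tl F (el h3) (el h4)
    · refine SIAux.dec_sub hd tl F (SIAux.dec_add hd tl F (SIAux.dec_add hd tl F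
        ?_ ?_) ?_) ?_
      · exact SIAux.dec_mul hd tl F (el h5) (el h6)
      · exact SIAux.dec_mul hd tl F (el h7) (el h8)
      · exact SIAux.dec_mul hd tl F (el hpc) (el h10)
      · exact SIAux.dec_mul hd tl F (SIAux.elI_mul hd tl F (el h5) (el h7)) (el hpc)
    · refine SIAux.dec_sub hd tl F (SIAux.dec_add hd tl F ?_ ?_) ?_
      · exact SIAux.dec_mul hd tl F (el h11) (el h12)
      · exact SIAux.dec_mul hd tl F (el h13) (el h14)
      · exact SIAux.dec_mul hd tl F (SIAux.elI_mul hd tl F (el hpc) (el h11)) (el h13)
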